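/- Let n ≥ 1, let h : Fin n → ℝ, and let T : Fin n → Fin n → Fin n → ℝ be totally symmetric. Then (Σ_i h(i)²)·(Σ_{i,j,k} T(i,j,k)²) − Σ_k (Σ_i h(i)·T(i,i,k))² = (1/2)·Σ_{i,s,k} (h(i)·T(s,s,k) − h(s)·T(i,i,k))² + (Σ_i h(i)²)·(2·Σ_{i≠j} T(i,i,j)² + Σ_{i,j,k pairwise distinct} T(i,j,k)²). In particular the left-hand side is nonnegative. -/
import Mathlib


open Finset

private lemma lagrange_sq {n : ℕ} (a b : Fin n → ℝ) :
    (∑ i, a i ^ 2) * (∑ i, b i ^ 2) - (∑ i, a i * b i) ^ 2 =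
      (1 / 2) * ∑ i, ∑ s, (a i * b s - a s * b i) ^ 2 := by
  have key : ∑ i, ∑ s, (a i * b s - a s * b i) ^ 2
      = ∑ i, (a i ^ 2 * (∑ s, b s ^ 2) + b i ^ 2 * (∑ s, a s ^ 2)
          - 2 * (a i * b i) * (∑ s, a s * b s)) := by
    refine Finset.sum_congr rfl fun i _ => ?_
    rw [Finset.mul_sum, Finset.mul_sum, Finset.mul_sum, ← Finset.sum_add_distrib,
      ← Finset.sum_sub_distrib]
    exact Finset.sum_congr rfl fun s _ => by ring
  have key2 : ∀ i : Fin n, a i ^ 2 * (∑ s, b s ^ 2) + b i ^ 2 * (∑ s, a s ^ 2)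
      - 2 * (a i * b i) * (∑ s, a s * b s)
      = a i ^ 2 * (∑ s, b s ^ 2) + b i ^ 2 * (∑ s, a s ^ 2)
        - (a i * b i) * (2 * (∑ s, a s * b s)) := fun i => by ring
  rw [key, Finset.sum_congr rfl (fun i _ => key2 i), Finset.sum_sub_distrib,
    Finset.sum_add_distrib, ← Finset.sum_mul, ← Finset.sum_mul, ← Finset.sum_mul]
  ring

private lemma sum_rotate {n : ℕ} (f : Fin n → Fin n → Fin n → ℝ) :
    ∑ i, ∑ s, ∑ k, f i s k = ∑ k, ∑ i, ∑ s, f i s k := by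
  calc ∑ i, ∑ s, ∑ k, f i s k = ∑ i, ∑ k, ∑ s, f i s k :=
        Finset.sum_congr rfl fun _ _ => Finset.sum_comm
    _ = ∑ k, ∑ i, ∑ s, f i s k := Finset.sum_comm

set_option maxHeartbeats 1600000 in
theorem symmetric_tensor_decomposition (n : ℕ) (hn : 1 ≤ n)
    (h : Fin n → ℝ) (T : Fin n → Fin n → Fin n → ℝ)
    (hsym₁ : ∀ i j k, T i j k = T j i k)
    (hsym₂ : ∀ i j k, T i j k = T i k j) :
    (∑ i, h i ^ 2) * (∑ i, ∑ j, ∑ k, T i j k ^ 2) -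
        ∑ k, (∑ i, h i * T i i k) ^ 2 =
      (1 / 2) * (∑ i, ∑ s, ∑ k, (h i * T s s k - h s * T i i k) ^ 2) +
        (∑ i, h i ^ 2) *
          (2 * (∑ i, ∑ j, if i ≠ j then T i i j ^ 2 else 0) +
            ∑ i, ∑ j, ∑ k, if i ≠ j ∧ j ≠ k ∧ i ≠ k then T i j k ^ 2 else 0) ∧
    0 ≤ (∑ i, h i ^ 2) * (∑ i, ∑ j, ∑ k, T i j k ^ 2) -
        ∑ k, (∑ i, h i * T i i k) ^ 2 := by
  -- pointwise decomposition of the full sum by index coincidences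
  have hpt : ∀ i j k : Fin n, T i j k ^ 2 =
      (if i = j then T i j k ^ 2 else 0) +
      (if i ≠ j ∧ j = k then T i j k ^ 2 else 0) +
      (if i ≠ j ∧ j ≠ k ∧ i = k then T i j k ^ 2 else 0) +
      (if i ≠ j ∧ j ≠ k ∧ i ≠ k then T i j k ^ 2 else 0) := by
    intro i j k
    by_cases h1 : i = j <;> by_cases h2 : j = k <;> by_cases h3 : i = k <;> simp_all
  have piece1 : ∑ i, ∑ j, ∑ k, (if i = j then T i j k ^ 2 else 0)
      = ∑ i, ∑ k, T i i k ^ 2 := by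
    refine Finset.sum_congr rfl fun i _ => ?_
    calc ∑ j, ∑ k, (if i = j then T i j k ^ 2 else 0)
        = ∑ j, (if i = j then ∑ k, T i j k ^ 2 else 0) := by
          refine Finset.sum_congr rfl fun j _ => ?_
          split <;> simp
      _ = ∑ k, T i i k ^ 2 := by rw [Finset.sum_ite_eq]; simp
  have piece2 : ∑ i, ∑ j, ∑ k, (if i ≠ j ∧ j = k then T i j k ^ 2 else 0)
      = ∑ i, ∑ j, (if i ≠ j then T i i j ^ 2 else 0) := by
    have step1 : ∀ i j : Fin n, ∑ k, (if i ≠ j ∧ j = k then T i j k ^ 2 else 0)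
        = if i ≠ j then T j j i ^ 2 else 0 := by
      intro i j
      by_cases hij : i = j
      · simp [hij]
      · simp only [hij, Ne, not_false_iff, true_and]
        rw [Finset.sum_ite_eq]
        simp only [Finset.mem_univ, if_true]
        rw [hsym₁ i j j, hsym₂ j i j]
    calc ∑ i, ∑ j, ∑ k, (if i ≠ j ∧ j = k then T i j k ^ 2 else 0)
        = ∑ i, ∑ j, (if i ≠ j then T j j i ^ 2 else 0) := by
          exact Finset.sum_congr rfl fun i _ => Finset.sum_congr rfl fun j _ => step1 i j
      _ = ∑ j, ∑ i, (if i ≠ j then T j j i ^ 2 else 0) := Finset.sum_comm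
      _ = ∑ i, ∑ j, (if i ≠ j then T i i j ^ 2 else 0) := by
          exact Finset.sum_congr rfl fun a _ => Finset.sum_congr rfl fun b _ =>
            if_congr ne_comm rfl rfl
  have piece3 : ∑ i, ∑ j, ∑ k, (if i ≠ j ∧ j ≠ k ∧ i = k then T i j k ^ 2 else 0)
      = ∑ i, ∑ j, (if i ≠ j then T i i j ^ 2 else 0) := by
    refine Finset.sum_congr rfl fun i _ => Finset.sum_congr rfl fun j _ => ?_
    calc ∑ k, (if i ≠ j ∧ j ≠ k ∧ i = k then T i j k ^ 2 else 0)
        = ∑ k, (if i = k then (if i ≠ j then T i j k ^ 2 else 0) else 0) := by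
          refine Finset.sum_congr rfl fun k _ => ?_
          by_cases h2 : i = k
          · subst h2
            by_cases h1 : i = j
            · simp [h1]
            · have h3 : j ≠ i := fun e => h1 e.symm
              simp [h1, h3]
          · simp [h2]
      _ = if i ≠ j then T i i j ^ 2 else 0 := by
          rw [Finset.sum_ite_eq]
          simp only [Finset.mem_univ, if_true]
          rw [hsym₂ i j i]
  have hdecomp : ∑ i, ∑ j, ∑ k, T i j k ^ 2
      = (∑ i, ∑ k, T i i k ^ 2) +
        (2 * (∑ i, ∑ j, if i ≠ j then T i i j ^ 2 else 0) +
          ∑ i, ∑ j, ∑ k, if i ≠ j ∧ j ≠ k ∧ i ≠ k then T i j k ^ 2 else 0) := by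
    calc ∑ i, ∑ j, ∑ k, T i j k ^ 2
        = (∑ i, ∑ j, ∑ k, (if i = j then T i j k ^ 2 else 0)) +
          (∑ i, ∑ j, ∑ k, (if i ≠ j ∧ j = k then T i j k ^ 2 else 0)) +
          (∑ i, ∑ j, ∑ k, (if i ≠ j ∧ j ≠ k ∧ i = k then T i j k ^ 2 else 0)) +
          (∑ i, ∑ j, ∑ k, (if i ≠ j ∧ j ≠ k ∧ i ≠ k then T i j k ^ 2 else 0)) := by
          simp_rw [← Finset.sum_add_distrib]
          exact Finset.sum_congr rfl fun i _ => Finset.sum_congr rfl fun j _ =>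
            Finset.sum_congr rfl fun k _ => hpt i j k
      _ = _ := by rw [piece1, piece2, piece3]; ring
  -- Lagrange identity summed over k
  have hlag : (∑ i, h i ^ 2) * (∑ i, ∑ k, T i i k ^ 2) - ∑ k, (∑ i, h i * T i i k) ^ 2
      = (1 / 2) * (∑ i, ∑ s, ∑ k, (h i * T s s k - h s * T i i k) ^ 2) := by
    rw [sum_rotate (fun i s k => (h i * T s s k - h s * T i i k) ^ 2)]
    rw [Finset.sum_comm (f := fun i k => T i i k ^ 2), Finset.mul_sum,
      ← Finset.sum_sub_distrib, Finset.mul_sum]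
    refine Finset.sum_congr rfl fun k _ => ?_
    have := lagrange_sq h (fun i => T i i k)
    linarith [this]
  have main : (∑ i, h i ^ 2) * (∑ i, ∑ j, ∑ k, T i j k ^ 2) -
        ∑ k, (∑ i, h i * T i i k) ^ 2 =
      (1 / 2) * (∑ i, ∑ s, ∑ k, (h i * T s s k - h s * T i i k) ^ 2) +
        (∑ i, h i ^ 2) *
          (2 * (∑ i, ∑ j, if i ≠ j then T i i j ^ 2 else 0) +
            ∑ i, ∑ j, ∑ k, if i ≠ j ∧ j ≠ k ∧ i ≠ k then T i j k ^ 2 else 0) := by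
    rw [hdecomp, mul_add]
    linarith [hlag]
  refine ⟨main, ?_⟩
  rw [main]
  have h1 : 0 ≤ ∑ i, ∑ s, ∑ k, (h i * T s s k - h s * T (i : Fin n) i k) ^ 2 :=
    Finset.sum_nonneg fun i _ => Finset.sum_nonneg fun s _ =>
      Finset.sum_nonneg fun k _ => sq_nonneg _
  have s1 : 0 ≤ ∑ i, ∑ j, if i ≠ j then T (i : Fin n) i j ^ 2 else 0 :=
    Finset.sum_nonneg fun i _ => Finset.sum_nonneg fun j _ => by
      split <;> [exact sq_nonneg _; exact le_refl 0]
  have s2 : 0 ≤ ∑ i, ∑ j, ∑ k,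
      if i ≠ j ∧ j ≠ k ∧ i ≠ k then T (i : Fin n) j k ^ 2 else 0 :=
    Finset.sum_nonneg fun i _ => Finset.sum_nonneg fun j _ =>
      Finset.sum_nonneg fun k _ => by split <;> [exact sq_nonneg _; exact le_refl 0]
  have s3 : 0 ≤ ∑ i, h (i : Fin n) ^ 2 :=
    Finset.sum_nonneg fun i _ => sq_nonneg _
  have h2 : 0 ≤ (∑ i, h i ^ 2) *
      (2 * (∑ i, ∑ j, if i ≠ j then T i i j ^ 2 else 0) +
        ∑ i, ∑ j, ∑ k, if i ≠ j ∧ j ≠ k ∧ i ≠ k then T i j k ^ 2 else 0) :=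
    mul_nonneg s3 (by linarith)
  linarith
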